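/- arXiv:2304.13602 — 3 statements merged into one kernel-verified Lean document; each statement's English description precedes it below -/
import Mathlib

section
/- Let u ≥ 0 and n = 4u+3. The ℤ-lattice ℤ·1 + ℤ·b + ℤ·b* inside the asymmetric rank-3 table algebra over ℚ equals the ℤ-span of {n·e₀, e₀ + e₁, (2u+1)·e₀ + b·e₁}, where e₀ = (1/n)(1+b+b*) and e₁ = 1 - e₀. Consequently the index of ℤ·1 + ℤ·b + ℤ·b* in the lattice ℤ·e₀ + ℤ·e₁ + ℤ·(b·e₁) is n. -/
set_option maxHeartbeats 1000000 in
/-- For the asymmetric rank-3 table algebra over `ℚ` of order `n = 4u+3`,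
the lattice `ℤ·1 + ℤ·b + ℤ·b*` equals the `ℤ`-span of
`{n·e₀, e₀ + e₁, (2u+1)·e₀ + b·e₁}`, and its index in `ℤe₀ + ℤe₁ + ℤ(b·e₁)` is `n`. -/
theorem stmt3 (A : Type*) [CommRing A] [Algebra ℚ A] (u : ℕ) (b bs : A)
    (h1 : b * bs = ((2 * u + 1 : ℕ) : A) + (u : A) * b + (u : A) * bs)
    (h1' : bs * b = ((2 * u + 1 : ℕ) : A) + (u : A) * b + (u : A) * bs)
    (h2 : b ^ 2 = (u : A) * b + ((u + 1 : ℕ) : A) * bs)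
    (h3 : bs ^ 2 = ((u + 1 : ℕ) : A) * b + (u : A) * bs)
    (hbasis : LinearIndependent ℚ ![(1 : A), b, bs])
    (e₀ e₁ : A)
    (he₀ : e₀ = ((4 * (u : ℚ) + 3)⁻¹) • (1 + b + bs))
    (he₁ : e₁ = 1 - e₀)
    (L L₀ : Submodule ℤ A)
    (hL : L = Submodule.span ℤ {(1 : A), b, bs})
    (hL₀ : L₀ = Submodule.span ℤ {e₀, e₁, b * e₁}) :
    L = Submodule.span ℤ
        {((4 * (u : ℤ) + 3) : ℤ) • e₀, e₀ + e₁, ((2 * (u : ℤ) + 1) : ℤ) • e₀ + b * e₁} ∧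
      Nat.card (L₀ ⧸ Submodule.comap L₀.subtype L) = 4 * u + 3 := by
  have hn : (4 * (u : ℚ) + 3) ≠ 0 := by positivity
  -- basic identities
  have hsum : (4 * (u : ℚ) + 3) • e₀ = 1 + b + bs := by
    rw [he₀, smul_smul, mul_inv_cancel₀ hn, one_smul]
  have hbprod : b * (1 + b + bs) = ((2 * u + 1 : ℕ) : A) * (1 + b + bs) := by
    push_cast
    push_cast at h1 h2
    linear_combination h1 + h2
  have hcast : ∀ x : A, (2 * (u : ℚ) + 1) • x = ((2 * u + 1 : ℕ) : A) * x := by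
    intro x
    have h : (2 * (u : ℚ) + 1) = ((2 * u + 1 : ℕ) : ℚ) := by push_cast; ring
    rw [h, Nat.cast_smul_eq_nsmul, nsmul_eq_mul]
  have hbe₀ : b * e₀ = (2 * (u : ℚ) + 1) • e₀ := by
    rw [hcast, he₀, mul_smul_comm, mul_smul_comm]
    exact congrArg _ hbprod
  have hbe₁ : b * e₁ = b - (2 * (u : ℚ) + 1) • e₀ := by
    rw [he₁, mul_sub, mul_one, hbe₀]
  have hcastn : ((4 * (u : ℤ) + 3 : ℤ) : ℚ) = 4 * (u : ℚ) + 3 := by push_cast; ring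
  have hA1 : ((4 * (u : ℤ) + 3) : ℤ) • e₀ = 1 + b + bs := by
    rw [← Int.cast_smul_eq_zsmul ℚ, hcastn, hsum]
  have hA2 : e₀ + e₁ = 1 := by rw [he₁]; ring
  have hA3 : ((2 * (u : ℤ) + 1) : ℤ) • e₀ + b * e₁ = b := by
    have h : ((2 * (u : ℤ) + 1 : ℤ) : ℚ) = 2 * (u : ℚ) + 1 := by push_cast; ring
    rw [hbe₁, ← Int.cast_smul_eq_zsmul ℚ, h]
    abel
  -- Part 1
  have part1 : L = Submodule.span ℤ
      {((4 * (u : ℤ) + 3) : ℤ) • e₀, e₀ + e₁, ((2 * (u : ℤ) + 1) : ℤ) • e₀ + b * e₁} := by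
    rw [hA1, hA2, hA3, hL]
    apply le_antisymm
    · rw [Submodule.span_le]
      have m1 : (1 : A) ∈ Submodule.span ℤ {1 + b + bs, 1, b} :=
        Submodule.subset_span (by simp)
      have mb : b ∈ Submodule.span ℤ {1 + b + bs, (1 : A), b} :=
        Submodule.subset_span (by simp)
      have ms : 1 + b + bs ∈ Submodule.span ℤ {1 + b + bs, (1 : A), b} :=
        Submodule.subset_span (by simp)
      have mbs : bs ∈ Submodule.span ℤ {1 + b + bs, (1 : A), b} := by
        have h := Submodule.sub_mem _ (Submodule.sub_mem _ ms m1) mb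
        rwa [show (1 : A) + b + bs - 1 - b = bs by ring] at h
      rintro x (rfl | rfl | rfl) <;> assumption
    · rw [Submodule.span_le]
      have m1 : (1 : A) ∈ Submodule.span ℤ {(1 : A), b, bs} :=
        Submodule.subset_span (by simp)
      have mb : b ∈ Submodule.span ℤ {(1 : A), b, bs} :=
        Submodule.subset_span (by simp)
      have mbs : bs ∈ Submodule.span ℤ {(1 : A), b, bs} :=
        Submodule.subset_span (by simp)
      have ms : 1 + b + bs ∈ Submodule.span ℤ {(1 : A), b, bs} :=
        Submodule.add_mem _ (Submodule.add_mem _ m1 mb) mbs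
      rintro x (rfl | rfl | rfl) <;> assumption
  refine ⟨part1, ?_⟩
  -- Part 2: construct the coordinate functional
  set v : Fin 3 → A := ![1, b, bs] with hv
  set p : Submodule ℚ A := Submodule.span ℚ (Set.range v) with hp
  obtain ⟨q, hq⟩ := p.exists_isCompl
  set π : A →ₗ[ℚ] p := p.linearProjOfIsCompl q hq with hπ
  set c : A →ₗ[ℚ] ℚ :=
    (Finsupp.lapply (2 : Fin 3)) ∘ₗ (hbasis.repr ∘ₗ π) with hc
  have hvm : ∀ i, v i ∈ p := fun i => Submodule.subset_span (Set.mem_range_self i)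
  have hcv : ∀ i, c (v i) = (Finsupp.single i (1 : ℚ)) 2 := by
    intro i
    have h1 : π (v i) = ⟨v i, hvm i⟩ :=
      Submodule.linearProjOfIsCompl_apply_left hq ⟨v i, hvm i⟩
    have h2 : hbasis.repr ⟨v i, hvm i⟩ = Finsupp.single i 1 :=
      hbasis.repr_eq_single i _ rfl
    simp [hc, h1, h2]
  have hc1 : c 1 = 0 := by simpa [hv, Finsupp.single_apply] using hcv 0
  have hcb : c b = 0 := by simpa [hv, Finsupp.single_apply] using hcv 1
  have hcbs : c bs = 1 := by simpa [hv, Finsupp.single_apply] using hcv 2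
  set φ : A →ₗ[ℚ] ℚ := (4 * (u : ℚ) + 3) • c with hφ
  have hφ1 : φ 1 = 0 := by simp [hφ, hc1]
  have hφb : φ b = 0 := by simp [hφ, hcb]
  have hφbs : φ bs = 4 * (u : ℚ) + 3 := by simp [hφ, hcbs]
  have hφe₀ : φ e₀ = 1 := by
    rw [he₀, map_smul, map_add, map_add, hφ1, hφb, hφbs]
    simp [inv_mul_cancel₀ hn]
  have hφe₁ : φ e₁ = -1 := by rw [he₁, map_sub, hφ1, hφe₀]; norm_num
  have hφbe₁ : φ (b * e₁) = -(2 * (u : ℚ) + 1) := by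
    rw [hbe₁, map_sub, map_smul, hφb, hφe₀]
    simp
  -- the ℤ-linear functional on L₀ and its reduction mod n
  set ψ : A →ₗ[ℤ] ℚ := φ.restrictScalars ℤ with hψ
  have hψint : ∀ x ∈ L₀, ∃ m : ℤ, ψ x = (m : ℚ) := by
    intro x hx
    rw [hL₀] at hx
    refine Submodule.span_induction ?_ ?_ ?_ ?_ hx
    · rintro y (rfl | rfl | rfl)
      · exact ⟨1, by simpa [hψ] using hφe₀⟩
      · exact ⟨-1, by simpa [hψ] using hφe₁⟩
      · exact ⟨-(2 * (u : ℤ) + 1), by push_cast; simpa [hψ] using hφbe₁⟩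
    · exact ⟨0, by simp⟩
    · rintro y z _ _ ⟨m, hm⟩ ⟨m', hm'⟩
      exact ⟨m + m', by rw [map_add, hm, hm']; push_cast; ring⟩
    · rintro k y _ ⟨m, hm⟩
      exact ⟨k * m, by rw [map_smul, hm]; push_cast; simp [zsmul_eq_mul]⟩
  have key : ∀ x : L₀, ((ψ x.1).num : ℚ) = ψ x.1 := by
    rintro ⟨x, hx⟩
    obtain ⟨m, hm⟩ := hψint x hx
    simp [hm]
  set Φ : L₀ →ₗ[ℤ] ℤ :=
    { toFun := fun x => (ψ x.1).num
      map_add' := by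
        intro x y
        apply Int.cast_injective (α := ℚ)
        rw [Int.cast_add, key (x + y), key x, key y]
        exact map_add ψ x.1 y.1
      map_smul' := by
        intro k x
        apply Int.cast_injective (α := ℚ)
        simp only [RingHom.id_apply, smul_eq_mul, Int.cast_mul]
        rw [key (k • x), key x]
        have h : ((k • x : L₀) : A) = k • (x : A) := rfl
        rw [h, map_smul, zsmul_eq_mul] } with hΦ
  have hΦval : ∀ (x : A) (hx : x ∈ L₀) (m : ℤ), ψ x = (m : ℚ) → Φ ⟨x, hx⟩ = m := by
    intro x hx m hm
    apply Int.cast_injective (α := ℚ)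
    rw [show ((Φ ⟨x, hx⟩ : ℤ) : ℚ) = ψ x from key ⟨x, hx⟩, hm]
  have he₀L₀ : e₀ ∈ L₀ := hL₀ ▸ Submodule.subset_span (by simp)
  set n : ℕ := 4 * u + 3 with hnn
  haveI : NeZero n := ⟨by omega⟩
  set C : ℤ →ₗ[ℤ] ZMod n := (Int.castAddHom (ZMod n)).toIntLinearMap with hC
  set Φ' : L₀ →ₗ[ℤ] ZMod n := C ∘ₗ Φ with hΦ'
  -- range is everything
  have hrange : LinearMap.range Φ' = ⊤ := by
    rw [LinearMap.range_eq_top]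
    intro t
    refine ⟨(t.val : ℤ) • ⟨e₀, he₀L₀⟩, ?_⟩
    have h0 : Φ ⟨e₀, he₀L₀⟩ = 1 := hΦval e₀ he₀L₀ 1 (by simpa [hψ] using hφe₀)
    rw [map_smul, hΦ']
    simp [hC, h0, ZMod.natCast_val, ZMod.cast_id]
  -- kernel computation
  have hker : LinearMap.ker Φ' = Submodule.comap L₀.subtype L := by
    ext x
    simp only [LinearMap.mem_ker, Submodule.mem_comap, Submodule.subtype_apply, hΦ']
    rw [LinearMap.comp_apply]
    constructor
    · intro h
      have hdvd : (n : ℤ) ∣ Φ x := (ZMod.intCast_zmod_eq_zero_iff_dvd (Φ x) n).mp h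
      obtain ⟨k, hk⟩ := hdvd
      -- decompose x over the generators of L₀
      have hx : x.1 ∈ Submodule.span ℤ {e₀, e₁, b * e₁} := hL₀ ▸ x.2
      rw [Submodule.mem_span_insert] at hx
      obtain ⟨a, z, hz, hxz⟩ := hx
      rw [Submodule.mem_span_insert] at hz
      obtain ⟨cc, w, hw, hzw⟩ := hz
      rw [Submodule.mem_span_singleton] at hw
      obtain ⟨d, hwd⟩ := hw
      have hxrep : x.1 = a • e₀ + cc • e₁ + d • (b * e₁) := by
        rw [hxz, hzw, ← hwd]; ring
      -- compute ψ x
      have hψx : ψ x.1 = ((a - cc - (2 * (u : ℤ) + 1) * d : ℤ) : ℚ) := by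
        rw [hxrep]
        rw [map_add, map_add, map_smul, map_smul, map_smul]
        simp only [hψ, LinearMap.restrictScalars_apply]
        rw [hφe₀, hφe₁, hφbe₁]
        push_cast
        simp [zsmul_eq_mul]
        ring
      have hΦx : Φ x = a - cc - (2 * (u : ℤ) + 1) * d := hΦval x.1 x.2 _ hψx
      have hacd : (a : ℚ) - cc - (2 * (u : ℚ) + 1) * d = (4 * (u : ℚ) + 3) * k := by
        have := hk
        rw [hΦx] at this
        have h2 : ((a - cc - (2 * (u : ℤ) + 1) * d : ℤ) : ℚ) = (((n : ℤ) * k : ℤ) : ℚ) := by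
          exact_mod_cast congrArg (fun z : ℤ => (z : ℚ)) this
        push_cast [hnn] at h2
        push_cast
        linarith [h2]
      -- show membership in L
      have hmem : x.1 = k • ((1 : A) + b + bs) + cc • (1 : A) + d • b := by
        have hzc : ∀ (m : ℤ) (y : A), m • y = (m : ℚ) • y := fun m y =>
          (Int.cast_smul_eq_zsmul ℚ m y).symm
        rw [hxrep, hzc a, hzc cc, hzc d, hzc k, hbe₁, he₁, ← hsum]
        match_scalars <;> (try ring) <;> linarith [hacd]
      rw [hL]
      rw [hmem]
      have m1 : (1 : A) ∈ Submodule.span ℤ {(1 : A), b, bs} :=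
        Submodule.subset_span (by simp)
      have mb : b ∈ Submodule.span ℤ {(1 : A), b, bs} :=
        Submodule.subset_span (by simp)
      have mbs : bs ∈ Submodule.span ℤ {(1 : A), b, bs} :=
        Submodule.subset_span (by simp)
      exact Submodule.add_mem _ (Submodule.add_mem _
        (Submodule.smul_mem _ k (Submodule.add_mem _ (Submodule.add_mem _ m1 mb) mbs))
        (Submodule.smul_mem _ cc m1)) (Submodule.smul_mem _ d mb)
    · intro h
      -- x ∈ L implies ψ x ∈ nℤ
      have hL' : ∀ y ∈ L, ∃ m : ℤ, ψ y = (((n : ℤ) * m : ℤ) : ℚ) := by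
        intro y hy
        rw [hL] at hy
        refine Submodule.span_induction ?_ ?_ ?_ ?_ hy
        · rintro w hw
          simp only [Set.mem_insert_iff, Set.mem_singleton_iff] at hw
          rcases hw with h | h | h
          · exact ⟨0, by rw [h]; simpa [hψ] using hφ1⟩
          · exact ⟨0, by rw [h]; simpa [hψ] using hφb⟩
          · refine ⟨1, ?_⟩
            rw [h]
            have hh : ψ bs = 4 * (u : ℚ) + 3 := hφbs
            rw [hh]; push_cast [hnn]; ring
        · exact ⟨0, by simp⟩
        · rintro y z _ _ ⟨m, hm⟩ ⟨m', hm'⟩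
          exact ⟨m + m', by rw [map_add, hm, hm']; push_cast; ring⟩
        · rintro kk y _ ⟨m, hm⟩
          exact ⟨kk * m, by rw [map_smul, hm]; push_cast; simp [zsmul_eq_mul]; ring⟩
      obtain ⟨m, hm⟩ := hL' x.1 h
      have hΦx : Φ x = (n : ℤ) * m := hΦval x.1 x.2 _ hm
      have hCx : C (Φ x) = (((n : ℤ) * m : ℤ) : ZMod n) := by rw [hΦx]; rfl
      rw [hCx]
      exact (ZMod.intCast_zmod_eq_zero_iff_dvd _ n).mpr ⟨m, rfl⟩
  -- assemble
  have e : (L₀ ⧸ Submodule.comap L₀.subtype L) ≃ₗ[ℤ] ZMod n :=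
    (Submodule.quotEquivOfEq _ _ hker.symm).trans
      ((Φ'.quotKerEquivRange).trans (LinearEquiv.ofTop _ hrange))
  rw [Nat.card_congr e.toEquiv, Nat.card_zmod]
end

section
/- Let p be an odd prime, v coprime to p, π with π² = pv, R = ℤ_p[π], and let Λ = ⟨p^m π e₁, e₁ + e₀, p^{2m+1} e₀⟩ be the ℤ_p-lattice in ℤ_p e₀ ⊕ R e₁ (m ≥ 0). For parameters 0 ≤ i ≤ m, 0 ≤ j ≤ 2m+1, 0 ≤ r < p^{2m+1}, the ℤ_p-lattice M(r,i,j) = ⟨e₀+e₁, r·e₀ + pⁱπ e₁, p^j e₀⟩ satisfies Λ ⊆ M(r,i,j) and Λ·M(r,i,j) ⊆ M(r,i,j) if and only if: m + i + 1 ≥ j, and (r = 0 or m + v_p(r) ≥ i + j). -/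
open Polynomial

section aux
variable {p : ℕ} [Fact p.Prime]

lemma pow_p_dvd_nat_iff (n k : ℕ) : (p : ℤ_[p]) ^ n ∣ (k : ℤ_[p]) ↔ p ^ n ∣ k := by
  have h : ((k : ℤ) : ℤ_[p]) = (k : ℤ_[p]) := by push_cast; ring
  rw [← h, PadicInt.pow_p_dvd_int_iff]
  exact_mod_cast Iff.rfl

lemma adjoin_indep (a x y : ℤ_[p])
    (h : algebraMap ℤ_[p] (AdjoinRoot (X ^ 2 - C a)) x
       + algebraMap ℤ_[p] (AdjoinRoot (X ^ 2 - C a)) y * AdjoinRoot.root _ = 0) :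
    x = 0 ∧ y = 0 := by
  have hmonic : (X ^ 2 - C a).Monic := monic_X_pow_sub_C a (by norm_num)
  have h2 : algebraMap ℤ_[p] (AdjoinRoot (X ^ 2 - C a)) x
       + algebraMap ℤ_[p] (AdjoinRoot (X ^ 2 - C a)) y * AdjoinRoot.root _
       = AdjoinRoot.mk _ (C x + C y * X) := by
    rw [AdjoinRoot.algebraMap_eq]
    rw [map_add, map_mul, AdjoinRoot.mk_C, AdjoinRoot.mk_C, AdjoinRoot.mk_X]
  rw [h2] at h
  have h3 := congrArg (AdjoinRoot.modByMonicHom hmonic) h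
  rw [AdjoinRoot.modByMonicHom_mk, map_zero] at h3
  rw [(modByMonic_eq_self_iff hmonic).2] at h3
  · constructor
    · simpa using congrArg (fun q => Polynomial.coeff q 0) h3
    · simpa using congrArg (fun q => Polynomial.coeff q 1) h3
  · apply lt_of_le_of_lt (degree_add_le _ _)
    rw [degree_X_pow_sub_C (by norm_num)]
    apply max_lt
    · exact lt_of_le_of_lt degree_C_le (by norm_num)
    · apply lt_of_le_of_lt (degree_mul_le _ _)
      calc (C y).degree + (X : ℤ_[p][X]).degree ≤ 0 + 1 := by
            exact add_le_add degree_C_le degree_X_le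
        _ < 2 := by norm_num

lemma adjoin_eq (a x1 y1 x2 y2 : ℤ_[p])
    (h : algebraMap ℤ_[p] (AdjoinRoot (X ^ 2 - C a)) x1
       + algebraMap ℤ_[p] (AdjoinRoot (X ^ 2 - C a)) y1 * AdjoinRoot.root _
       = algebraMap ℤ_[p] (AdjoinRoot (X ^ 2 - C a)) x2
       + algebraMap ℤ_[p] (AdjoinRoot (X ^ 2 - C a)) y2 * AdjoinRoot.root _) :
    x1 = x2 ∧ y1 = y2 := by
  have h0 := adjoin_indep a (x1 - x2) (y1 - y2) (by
    rw [map_sub, map_sub]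
    linear_combination h)
  exact ⟨sub_eq_zero.mp h0.1, sub_eq_zero.mp h0.2⟩

end aux

set_option maxHeartbeats 1000000
set_option synthInstance.maxHeartbeats 200000

/-- Let `p` be an odd prime, `v ∈ ℤ_p×`, `π` with `π² = pv`, and
`R = ℤ_p[π]` (modeled as `AdjoinRoot (X² - pv)`).  Inside `Λ₀ = ℤ_p e₀ ⊕ R e₁`
(identified with `ℤ_p × R`), let `Λ = ⟨pᵐ π e₁, e₀ + e₁, p^{2m+1} e₀⟩`.  For
`0 ≤ i ≤ m`, `0 ≤ j ≤ 2m+1`, `0 ≤ r < p^{2m+1}`, the `ℤ_p`-lattice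
`M(r,i,j) = ⟨e₀ + e₁, r·e₀ + pⁱπ e₁, p^j e₀⟩` satisfies `Λ ⊆ M(r,i,j)` and
`Λ·M(r,i,j) ⊆ M(r,i,j)` if and only if `m + i + 1 ≥ j` and
(`r = 0` or `m + v_p(r) ≥ i + j`). -/
theorem stmt17 (p : ℕ) [Fact p.Prime] (hodd : Odd p) (v : ℤ_[p]) (hv : IsUnit v)
    (π : AdjoinRoot (X ^ 2 - C ((p : ℤ_[p]) * v)))
    (hπ : π = AdjoinRoot.root _)
    (m : ℕ)
    (Λ : Submodule ℤ_[p] (ℤ_[p] × AdjoinRoot (X ^ 2 - C ((p : ℤ_[p]) * v))))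
    (hΛ : Λ = Submodule.span ℤ_[p]
      {((0 : ℤ_[p]), (p : AdjoinRoot (X ^ 2 - C ((p : ℤ_[p]) * v))) ^ m * π),
       ((1 : ℤ_[p]), (1 : AdjoinRoot (X ^ 2 - C ((p : ℤ_[p]) * v)))),
       ((p : ℤ_[p]) ^ (2 * m + 1), (0 : AdjoinRoot (X ^ 2 - C ((p : ℤ_[p]) * v))))})
    (i j r : ℕ) (hi : i ≤ m) (hj : j ≤ 2 * m + 1) (hr : r < p ^ (2 * m + 1))
    (M : Submodule ℤ_[p] (ℤ_[p] × AdjoinRoot (X ^ 2 - C ((p : ℤ_[p]) * v))))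
    (hM : M = Submodule.span ℤ_[p]
      {((1 : ℤ_[p]), (1 : AdjoinRoot (X ^ 2 - C ((p : ℤ_[p]) * v)))),
       ((r : ℤ_[p]), (p : AdjoinRoot (X ^ 2 - C ((p : ℤ_[p]) * v))) ^ i * π),
       ((p : ℤ_[p]) ^ j, (0 : AdjoinRoot (X ^ 2 - C ((p : ℤ_[p]) * v))))}) :
    (Λ ≤ M ∧ ∀ x ∈ Λ, ∀ y ∈ M, x * y ∈ M) ↔
      (j ≤ m + i + 1 ∧ (r = 0 ∨ i + j ≤ m + padicValNat p r)) := by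
  have hp1 : 1 < p := (Fact.out : p.Prime).one_lt
  have hpz : (p : ℤ_[p]) ≠ 0 := Nat.cast_ne_zero.mpr (by omega)
  have hcast : ∀ n : ℕ, algebraMap ℤ_[p] (AdjoinRoot (X ^ 2 - C ((p : ℤ_[p]) * v))) ((p : ℤ_[p]) ^ n) = (p : (AdjoinRoot (X ^ 2 - C ((p : ℤ_[p]) * v)))) ^ n := by
    intro n; rw [map_pow, map_natCast]
  -- characterization of membership in M
  have hgen : ∀ c1 c2 c3 : ℤ_[p],
      c1 • ((1 : ℤ_[p]), (1 : (AdjoinRoot (X ^ 2 - C ((p : ℤ_[p]) * v))))) + (c2 • ((r : ℤ_[p]), (p : (AdjoinRoot (X ^ 2 - C ((p : ℤ_[p]) * v)))) ^ i * π)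
        + c3 • ((p : ℤ_[p]) ^ j, (0 : (AdjoinRoot (X ^ 2 - C ((p : ℤ_[p]) * v))))))
      = (c1 + c2 * r + c3 * p ^ j,
         algebraMap ℤ_[p] (AdjoinRoot (X ^ 2 - C ((p : ℤ_[p]) * v))) c1 + algebraMap ℤ_[p] (AdjoinRoot (X ^ 2 - C ((p : ℤ_[p]) * v))) (c2 * (p : ℤ_[p]) ^ i) * π) := by
    intro c1 c2 c3
    rw [Prod.smul_mk, Prod.smul_mk, Prod.smul_mk, Prod.mk_add_mk, Prod.mk_add_mk]
    refine Prod.ext (by simp only [smul_eq_mul]; ring) ?_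
    simp only [Algebra.smul_def, map_mul, hcast, mul_one, mul_zero, add_zero]
    ring
  have hmem : ∀ z : ℤ_[p] × (AdjoinRoot (X ^ 2 - C ((p : ℤ_[p]) * v))), z ∈ M ↔ ∃ c1 c2 c3 : ℤ_[p],
      z = (c1 + c2 * r + c3 * p ^ j,
           algebraMap ℤ_[p] (AdjoinRoot (X ^ 2 - C ((p : ℤ_[p]) * v))) c1 + algebraMap ℤ_[p] (AdjoinRoot (X ^ 2 - C ((p : ℤ_[p]) * v))) (c2 * (p : ℤ_[p]) ^ i) * π) := by
    intro z
    rw [hM]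
    constructor
    · intro hz
      rw [Submodule.mem_span_insert] at hz
      obtain ⟨c1, z1, hz1, rfl⟩ := hz
      rw [Submodule.mem_span_insert] at hz1
      obtain ⟨c2, z2, hz2, rfl⟩ := hz1
      rw [Submodule.mem_span_singleton] at hz2
      obtain ⟨c3, rfl⟩ := hz2
      exact ⟨c1, c2, c3, hgen c1 c2 c3⟩
    · rintro ⟨c1, c2, c3, rfl⟩
      rw [← hgen]
      refine Submodule.add_mem _ (Submodule.smul_mem _ _ (Submodule.subset_span (Set.mem_insert _ _)))
        (Submodule.add_mem _
          (Submodule.smul_mem _ _ (Submodule.subset_span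
            (Set.mem_insert_of_mem _ (Set.mem_insert _ _))))
          (Submodule.smul_mem _ _ (Submodule.subset_span
            (Set.mem_insert_of_mem _ (Set.mem_insert_of_mem _ rfl)))))
  -- π * π = p * v
  have hsq : π * π = algebraMap ℤ_[p] (AdjoinRoot (X ^ 2 - C ((p : ℤ_[p]) * v))) ((p : ℤ_[p]) * v) := by
    have h0 := AdjoinRoot.eval₂_root (X ^ 2 - C ((p : ℤ_[p]) * v))
    rw [eval₂_sub, eval₂_pow, eval₂_X, eval₂_C, sub_eq_zero] at h0
    rw [hπ, ← pow_two, h0, AdjoinRoot.algebraMap_eq]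
  -- the valuation condition is equivalent to a divisibility
  have hcond_iff : ((p : ℤ_[p]) ^ j ∣ (p : ℤ_[p]) ^ (m - i) * r) ↔
      (r = 0 ∨ i + j ≤ m + padicValNat p r) := by
    have hc : (p : ℤ_[p]) ^ (m - i) * r = ((p ^ (m - i) * r : ℕ) : ℤ_[p]) := by push_cast; ring
    rw [hc, pow_p_dvd_nat_iff, padicValNat_dvd_iff]
    rcases eq_or_ne r 0 with rfl | hr0
    · simp
    · have : p ^ (m - i) * r ≠ 0 := by positivity
      rw [or_iff_right this, or_iff_right hr0,
        padicValNat.mul (by positivity) hr0, padicValNat.prime_pow]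
      omega
  constructor
  · rintro ⟨hle, hmul⟩
    have hg1Λ : ((0 : ℤ_[p]), (p : (AdjoinRoot (X ^ 2 - C ((p : ℤ_[p]) * v)))) ^ m * π) ∈ Λ := by
      rw [hΛ]; exact Submodule.subset_span (Set.mem_insert _ _)
    have hh2M : ((r : ℤ_[p]), (p : (AdjoinRoot (X ^ 2 - C ((p : ℤ_[p]) * v)))) ^ i * π) ∈ M := by
      rw [hM]; exact Submodule.subset_span (Set.mem_insert_of_mem _ (Set.mem_insert _ _))
    -- condition 2 from Λ ≤ M
    have hc2 : r = 0 ∨ i + j ≤ m + padicValNat p r := by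
      rw [← hcond_iff]
      obtain ⟨c1, c2, c3, heq⟩ := (hmem _).1 (hle hg1Λ)
      rw [Prod.mk.injEq] at heq
      obtain ⟨e1, e2⟩ := heq
      have e2' : algebraMap ℤ_[p] (AdjoinRoot (X ^ 2 - C ((p : ℤ_[p]) * v))) 0 + algebraMap ℤ_[p] (AdjoinRoot (X ^ 2 - C ((p : ℤ_[p]) * v))) ((p : ℤ_[p]) ^ m) * π
          = algebraMap ℤ_[p] (AdjoinRoot (X ^ 2 - C ((p : ℤ_[p]) * v))) c1 + algebraMap ℤ_[p] (AdjoinRoot (X ^ 2 - C ((p : ℤ_[p]) * v))) (c2 * (p : ℤ_[p]) ^ i) * π := by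
        rw [map_zero, zero_add, hcast, e2]
      rw [hπ] at e2'
      obtain ⟨ec1, ec2⟩ := adjoin_eq _ _ _ _ _ e2'
      have hc2v : c2 = (p : ℤ_[p]) ^ (m - i) := by
        have : c2 * (p : ℤ_[p]) ^ i = (p : ℤ_[p]) ^ (m - i) * (p : ℤ_[p]) ^ i := by
          rw [← pow_add, Nat.sub_add_cancel hi, ← ec2]
        exact mul_right_cancel₀ (pow_ne_zero _ hpz) this
      refine ⟨-c3, ?_⟩
      rw [hc2v] at e1
      rw [← ec1] at e1
      linear_combination -e1
    -- condition 1 from multiplicativity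
    have hc1 : j ≤ m + i + 1 := by
      have hprod := hmul _ hg1Λ _ hh2M
      have hpe : ((0 : ℤ_[p]), (p : (AdjoinRoot (X ^ 2 - C ((p : ℤ_[p]) * v)))) ^ m * π) * ((r : ℤ_[p]), (p : (AdjoinRoot (X ^ 2 - C ((p : ℤ_[p]) * v)))) ^ i * π)
          = ((0 : ℤ_[p]), algebraMap ℤ_[p] (AdjoinRoot (X ^ 2 - C ((p : ℤ_[p]) * v))) ((p : ℤ_[p]) ^ (m + i + 1) * v)
              + algebraMap ℤ_[p] (AdjoinRoot (X ^ 2 - C ((p : ℤ_[p]) * v))) (0 * (p : ℤ_[p]) ^ i) * π) := by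
        rw [Prod.mk_mul_mk, Prod.mk.injEq]
        refine ⟨zero_mul _, ?_⟩
        have h' : (p : (AdjoinRoot (X ^ 2 - C ((p : ℤ_[p]) * v)))) ^ m * π * ((p : (AdjoinRoot (X ^ 2 - C ((p : ℤ_[p]) * v)))) ^ i * π) = (p : (AdjoinRoot (X ^ 2 - C ((p : ℤ_[p]) * v)))) ^ (m + i) * (π * π) := by ring
        rw [h', hsq, zero_mul, map_zero, zero_mul, add_zero, ← hcast (m + i),
          ← map_mul]
        congr 1
        ring
      rw [hpe] at hprod
      obtain ⟨c1, c2, c3, heq⟩ := (hmem _).1 hprod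
      rw [Prod.mk.injEq] at heq
      obtain ⟨e1, e2⟩ := heq
      rw [hπ] at e2
      obtain ⟨ec1, ec2⟩ := adjoin_eq _ _ _ _ _ e2
      have hc2z : c2 = 0 := (mul_right_cancel₀ (pow_ne_zero i hpz) ec2).symm
      have hdvd : (p : ℤ_[p]) ^ j ∣ (p : ℤ_[p]) ^ (m + i + 1) * v := by
        refine ⟨-c3, ?_⟩
        rw [← ec1] at e1
        rw [hc2z] at e1
        linear_combination -e1
      rw [hv.dvd_mul_right] at hdvd
      have : (p : ℤ_[p]) ^ (m + i + 1) = ((p ^ (m + i + 1) : ℕ) : ℤ_[p]) := by push_cast; ring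
      rw [this, pow_p_dvd_nat_iff] at hdvd
      exact (Nat.pow_dvd_pow_iff_le_right hp1).mp hdvd
    exact ⟨hc1, hc2⟩
  · rintro ⟨hc1, hc2⟩
    obtain ⟨d, hd⟩ : (p : ℤ_[p]) ^ j ∣ (p : ℤ_[p]) ^ (m - i) * r := hcond_iff.mpr hc2
    -- the three generators of Λ are in M
    have mem1 : ((0 : ℤ_[p]), (p : (AdjoinRoot (X ^ 2 - C ((p : ℤ_[p]) * v)))) ^ m * π) ∈ M := by
      rw [hmem]
      refine ⟨0, (p : ℤ_[p]) ^ (m - i), -d, ?_⟩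
      rw [Prod.mk.injEq]
      constructor
      · linear_combination -hd
      · rw [map_zero, zero_add, ← pow_add, Nat.sub_add_cancel hi, hcast]
    have mem2 : ((1 : ℤ_[p]), (1 : (AdjoinRoot (X ^ 2 - C ((p : ℤ_[p]) * v))))) ∈ M := by
      rw [hM]; exact Submodule.subset_span (Set.mem_insert _ _)
    have mem3 : ((p : ℤ_[p]) ^ (2 * m + 1), (0 : (AdjoinRoot (X ^ 2 - C ((p : ℤ_[p]) * v))))) ∈ M := by
      rw [hmem]
      refine ⟨0, 0, (p : ℤ_[p]) ^ (2 * m + 1 - j), ?_⟩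
      rw [Prod.mk.injEq]
      constructor
      · rw [← pow_add, Nat.sub_add_cancel hj]; ring
      · simp only [zero_mul, mul_zero, map_zero, zero_add, add_zero]
    have hle : Λ ≤ M := by
      rw [hΛ, Submodule.span_le]
      rintro z hz
      simp only [Set.mem_insert_iff, Set.mem_singleton_iff] at hz
      rcases hz with rfl | rfl | rfl
      · exact mem1
      · exact mem2
      · exact mem3
    refine ⟨hle, ?_⟩
    intro x hx y hy
    rw [hΛ] at hx
    induction hx using Submodule.span_induction with
    | zero => rw [zero_mul]; exact M.zero_mem
    | add x1 x2 hx1 hx2 ih1 ih2 => rw [add_mul]; exact M.add_mem ih1 ih2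
    | smul c x hx ih => rw [smul_mul_assoc]; exact M.smul_mem c ih
    | mem z hz =>
      simp only [Set.mem_insert_iff, Set.mem_singleton_iff] at hz
      rw [hM] at hy
      rcases hz with rfl | rfl | rfl
      · -- z = (0, p^m π)
        induction hy using Submodule.span_induction with
        | zero => rw [mul_zero]; exact M.zero_mem
        | add y1 y2 hy1 hy2 ih1 ih2 => rw [mul_add]; exact M.add_mem ih1 ih2
        | smul c y hy ih => rw [mul_smul_comm]; exact M.smul_mem c ih
        | mem w hw =>
          simp only [Set.mem_insert_iff, Set.mem_singleton_iff] at hw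
          rcases hw with rfl | rfl | rfl
          · rw [Prod.mk_mul_mk, mul_one, mul_one]; exact mem1
          · rw [Prod.mk_mul_mk, hmem]
            refine ⟨(p : ℤ_[p]) ^ (m + i + 1) * v, 0, -((p : ℤ_[p]) ^ (m + i + 1 - j) * v), ?_⟩
            rw [Prod.mk.injEq]
            constructor
            · have h'' : (p : ℤ_[p]) ^ (m + i + 1 - j) * (p : ℤ_[p]) ^ j
                  = (p : ℤ_[p]) ^ (m + i + 1) := by
                rw [← pow_add, Nat.sub_add_cancel (by omega)]
              linear_combination (v : ℤ_[p]) * h''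
            · have h' : (p : (AdjoinRoot (X ^ 2 - C ((p : ℤ_[p]) * v)))) ^ m * π * ((p : (AdjoinRoot (X ^ 2 - C ((p : ℤ_[p]) * v)))) ^ i * π) = (p : (AdjoinRoot (X ^ 2 - C ((p : ℤ_[p]) * v)))) ^ (m + i) * (π * π) := by
                ring
              rw [h', hsq, zero_mul, map_zero, zero_mul, add_zero, ← hcast (m + i),
                ← map_mul]
              congr 1
              ring
          · rw [Prod.mk_mul_mk, zero_mul, mul_zero]; exact M.zero_mem
      · rw [show ((1 : ℤ_[p]), (1 : (AdjoinRoot (X ^ 2 - C ((p : ℤ_[p]) * v))))) = (1 : ℤ_[p] × (AdjoinRoot (X ^ 2 - C ((p : ℤ_[p]) * v)))) from rfl, one_mul]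
        rw [← hM] at hy; exact hy
      · -- z = (p^{2m+1}, 0)
        induction hy using Submodule.span_induction with
        | zero => rw [mul_zero]; exact M.zero_mem
        | add y1 y2 hy1 hy2 ih1 ih2 => rw [mul_add]; exact M.add_mem ih1 ih2
        | smul c y hy ih => rw [mul_smul_comm]; exact M.smul_mem c ih
        | mem w hw =>
          simp only [Set.mem_insert_iff, Set.mem_singleton_iff] at hw
          rcases hw with rfl | rfl | rfl
          · rw [Prod.mk_mul_mk, mul_one, mul_one]; exact mem3
          · rw [Prod.mk_mul_mk, hmem]
            refine ⟨0, 0, (p : ℤ_[p]) ^ (2 * m + 1 - j) * r, ?_⟩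
            rw [Prod.mk.injEq]
            constructor
            · have h'' : (p : ℤ_[p]) ^ (2 * m + 1 - j) * (p : ℤ_[p]) ^ j
                  = (p : ℤ_[p]) ^ (2 * m + 1) := by
                rw [← pow_add, Nat.sub_add_cancel hj]
              linear_combination -(r : ℤ_[p]) * h''
            · simp only [zero_mul, mul_zero, map_zero, zero_add, add_zero]
          · rw [Prod.mk_mul_mk, hmem]
            refine ⟨0, 0, (p : ℤ_[p]) ^ (2 * m + 1), ?_⟩
            rw [Prod.mk.injEq]
            constructor
            · ring
            · simp only [zero_mul, mul_zero, map_zero, zero_add, add_zero]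
end

section
/- For the fusion ring ℤ𝔅 of Rep(S₃), with basis {1, b, d} and relations b² = 1, bd = db = d, d² = 1 + b + d, the primitive idempotents of ℚ𝔅 are e_δ = (1/6)(1 + b + 2d), e_ψ = (1/3)(1 + b - d), e_φ = (1/2)(1 - b): these are pairwise orthogonal idempotents summing to 1, and ℤ𝔅 = ℤ·1 + 2ℤ(e_δ + e_ψ) + 3ℤ·e_ψ, which has index 6 in the maximal order ℤe_δ ⊕ ℤe_ψ ⊕ ℤe_φ. -/
set_option maxHeartbeats 4000000
set_option synthInstance.maxHeartbeats 1000000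


/-- For the fusion ring of `Rep(S₃)`, presented by generators `b, d` with
relations `b² = 1`, `bd = d`, `d² = 1 + b + d`, the primitive idempotents of `ℚ𝔅` are
`e_δ = (1/6)(1 + b + 2d)`, `e_ψ = (1/3)(1 + b - d)`, `e_φ = (1/2)(1 - b)`: pairwise
orthogonal idempotents summing to `1`; moreover `ℤ𝔅 = ℤ·1 + 2ℤ(e_δ+e_ψ) + 3ℤ·e_ψ`,
which has index `6` in the maximal order `ℤe_δ ⊕ ℤe_ψ ⊕ ℤe_φ`. -/
theorem stmt19
    (I : Ideal (MvPolynomial (Fin 2) ℚ))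
    (hI : I = Ideal.span {MvPolynomial.X 0 ^ 2 - 1,
      MvPolynomial.X 0 * MvPolynomial.X 1 - MvPolynomial.X 1,
      MvPolynomial.X 1 ^ 2 - (1 + MvPolynomial.X 0 + MvPolynomial.X 1)})
    (b d : MvPolynomial (Fin 2) ℚ ⧸ I)
    (hb : b = Ideal.Quotient.mk I (MvPolynomial.X 0))
    (hd : d = Ideal.Quotient.mk I (MvPolynomial.X 1))
    (eδ eψ eφ : MvPolynomial (Fin 2) ℚ ⧸ I)
    (heδ : eδ = ((6 : ℚ)⁻¹) • (1 + b + 2 * d))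
    (heψ : eψ = ((3 : ℚ)⁻¹) • (1 + b - d))
    (heφ : eφ = ((2 : ℚ)⁻¹) • (1 - b))
    (L L₀ : Submodule ℤ (MvPolynomial (Fin 2) ℚ ⧸ I))
    (hL : L = Submodule.span ℤ {(1 : MvPolynomial (Fin 2) ℚ ⧸ I), b, d})
    (hL₀ : L₀ = Submodule.span ℤ {eδ, eψ, eφ}) :
    eδ + eψ + eφ = 1 ∧
      eδ * eψ = 0 ∧ eδ * eφ = 0 ∧ eψ * eφ = 0 ∧
      eδ ^ 2 = eδ ∧ eψ ^ 2 = eψ ∧ eφ ^ 2 = eφ ∧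
      L = Submodule.span ℤ
        {(1 : MvPolynomial (Fin 2) ℚ ⧸ I), (2 : ℤ) • (eδ + eψ), (3 : ℤ) • eψ} ∧
      Nat.card (L₀ ⧸ Submodule.comap L₀.subtype L) = 6 := by
  -- the three defining relations
  have hb2 : b * b = 1 := by
    rw [hb, ← map_mul, ← map_one (Ideal.Quotient.mk I)]
    refine Ideal.Quotient.eq.mpr ?_
    rw [hI]
    refine Ideal.subset_span ?_
    simp only [Set.mem_insert_iff, Set.mem_singleton_iff]
    left; ring
  have hbd : b * d = d := by
    rw [hb, hd, ← map_mul]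
    refine Ideal.Quotient.eq.mpr ?_
    rw [hI]
    refine Ideal.subset_span ?_
    simp only [Set.mem_insert_iff, Set.mem_singleton_iff]
    right; left; trivial
  have hd2 : d * d = 1 + b + d := by
    rw [hb, hd, ← map_mul, ← map_one (Ideal.Quotient.mk I), ← map_add, ← map_add]
    refine Ideal.Quotient.eq.mpr ?_
    rw [hI]
    refine Ideal.subset_span ?_
    simp only [Set.mem_insert_iff, Set.mem_singleton_iff]
    right; right; ring
  -- rational scalars are injective
  have hinj : ∀ (q : ℚ) (x y : (MvPolynomial (Fin 2) ℚ ⧸ I)), q ≠ 0 → q • x = q • y → x = y := by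
    intro q x y hq h
    have := congrArg (fun z : (MvPolynomial (Fin 2) ℚ ⧸ I) => q⁻¹ • z) h
    simpa [smul_smul, inv_mul_cancel₀ hq] using this
  -- rational numeral scalars act as ring numerals
  have hq2 : ∀ x : (MvPolynomial (Fin 2) ℚ ⧸ I), (2 : ℚ) • x = 2 * x := fun x => by
    rw [show (2 : ℚ) = ((2 : ℕ) : ℚ) from by norm_num, Nat.cast_smul_eq_nsmul,
      nsmul_eq_mul]
    norm_num
  have hq3 : ∀ x : (MvPolynomial (Fin 2) ℚ ⧸ I), (3 : ℚ) • x = 3 * x := fun x => by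
    rw [show (3 : ℚ) = ((3 : ℕ) : ℚ) from by norm_num, Nat.cast_smul_eq_nsmul,
      nsmul_eq_mul]
    norm_num
  have hq6 : ∀ x : (MvPolynomial (Fin 2) ℚ ⧸ I), (6 : ℚ) • x = 6 * x := fun x => by
    rw [show (6 : ℚ) = ((6 : ℕ) : ℚ) from by norm_num, Nat.cast_smul_eq_nsmul,
      nsmul_eq_mul]
    norm_num
  have E1 : (6 : ℚ) • eδ = 1 + b + 2 * d := by
    rw [heδ, smul_smul, show (6 : ℚ) * 6⁻¹ = 1 from by norm_num, one_smul]
  have E2 : (3 : ℚ) • eψ = 1 + b - d := by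
    rw [heψ, smul_smul, show (3 : ℚ) * 3⁻¹ = 1 from by norm_num, one_smul]
  have E3 : (2 : ℚ) • eφ = 1 - b := by
    rw [heφ, smul_smul, show (2 : ℚ) * 2⁻¹ = 1 from by norm_num, one_smul]
  have E6ψ : (6 : ℚ) • eψ = 2 * (1 + b - d) := by
    rw [← hq2, ← E2, smul_smul, show (2 : ℚ) * 3 = 6 from by norm_num]
  have E6φ : (6 : ℚ) • eφ = 3 * (1 - b) := by
    rw [← hq3, ← E3, smul_smul, show (3 : ℚ) * 2 = 6 from by norm_num]
  have hsum : eδ + eψ + eφ = 1 := by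
    refine hinj 6 _ _ (by norm_num) ?_
    rw [smul_add, smul_add, E1, E6ψ, E6φ, hq6]
    ring
  have hδψ : eδ * eψ = 0 := by
    refine hinj 18 _ _ (by norm_num) ?_
    have h18 : (18 : ℚ) • (eδ * eψ) = ((6 : ℚ) • eδ) * ((3 : ℚ) • eψ) := by
      rw [smul_mul_assoc, mul_smul_comm, smul_smul]; norm_num
    rw [h18, E1, E2, smul_zero]
    linear_combination hb2 + hbd - 2 * hd2
  have hδφ : eδ * eφ = 0 := by
    refine hinj 12 _ _ (by norm_num) ?_
    have h12 : (12 : ℚ) • (eδ * eφ) = ((6 : ℚ) • eδ) * ((2 : ℚ) • eφ) := by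
      rw [smul_mul_assoc, mul_smul_comm, smul_smul]; norm_num
    rw [h12, E1, E3, smul_zero]
    linear_combination -hb2 - 2 * hbd
  have hψφ : eψ * eφ = 0 := by
    refine hinj 6 _ _ (by norm_num) ?_
    have h6' : (6 : ℚ) • (eψ * eφ) = ((3 : ℚ) • eψ) * ((2 : ℚ) • eφ) := by
      rw [smul_mul_assoc, mul_smul_comm, smul_smul]; norm_num
    rw [h6', E2, E3, smul_zero]
    linear_combination -hb2 + hbd
  have hδ2 : eδ ^ 2 = eδ := by
    refine hinj 36 _ _ (by norm_num) ?_
    have hl : (36 : ℚ) • eδ ^ 2 = ((6 : ℚ) • eδ) * ((6 : ℚ) • eδ) := by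
      rw [smul_mul_assoc, mul_smul_comm, smul_smul, sq]; norm_num
    have hr : (36 : ℚ) • eδ = (6 : ℚ) • ((6 : ℚ) • eδ) := by
      rw [smul_smul]; norm_num
    rw [hl, hr, E1, hq6]
    linear_combination hb2 + 4 * hd2 + 4 * hbd
  have hψ2 : eψ ^ 2 = eψ := by
    refine hinj 9 _ _ (by norm_num) ?_
    have hl : (9 : ℚ) • eψ ^ 2 = ((3 : ℚ) • eψ) * ((3 : ℚ) • eψ) := by
      rw [smul_mul_assoc, mul_smul_comm, smul_smul, sq]; norm_num
    have hr : (9 : ℚ) • eψ = (3 : ℚ) • ((3 : ℚ) • eψ) := by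
      rw [smul_smul]; norm_num
    rw [hl, hr, E2, hq3]
    linear_combination hb2 + hd2 - 2 * hbd
  have hφ2 : eφ ^ 2 = eφ := by
    refine hinj 4 _ _ (by norm_num) ?_
    have hl : (4 : ℚ) • eφ ^ 2 = ((2 : ℚ) • eφ) * ((2 : ℚ) • eφ) := by
      rw [smul_mul_assoc, mul_smul_comm, smul_smul, sq]; norm_num
    have hr : (4 : ℚ) • eφ = (2 : ℚ) • ((2 : ℚ) • eφ) := by
      rw [smul_smul]; norm_num
    rw [hl, hr, E3, hq2]
    linear_combination hb2
  -- integer smul identities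
  have g2 : (2 : ℤ) • (eδ + eψ) = 1 + b := by
    have hc : (2 : ℤ) • (eδ + eψ) = (2 : ℚ) • (eδ + eψ) := by
      rw [← Int.cast_smul_eq_zsmul ℚ]; norm_num
    rw [hc]
    refine hinj 3 _ _ (by norm_num) ?_
    rw [smul_smul, show (3 : ℚ) * 2 = 6 by norm_num, smul_add, E1, E6ψ, hq3]
    ring
  have g3 : (3 : ℤ) • eψ = 1 + b - d := by
    have hc : (3 : ℤ) • eψ = (3 : ℚ) • eψ := by
      rw [← Int.cast_smul_eq_zsmul ℚ]; norm_num
    rw [hc, E2]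
  have g6 : (6 : ℤ) • eδ = 1 + b + 2 * d := by
    have hc : (6 : ℤ) • eδ = (6 : ℚ) • eδ := by
      rw [← Int.cast_smul_eq_zsmul ℚ]; norm_num
    rw [hc, E1]
  have g2δψ : (2 : ℤ) • eδ - eψ = d := by
    have hc : (2 : ℤ) • eδ = (2 : ℚ) • eδ := by
      rw [← Int.cast_smul_eq_zsmul ℚ]; norm_num
    rw [hc]
    refine hinj 3 _ _ (by norm_num) ?_
    rw [smul_sub, smul_smul, show (3 : ℚ) * 2 = 6 by norm_num, E1, E2, hq3]
    ring
  have g3δφ : (-3 : ℤ) • eδ - eφ = -(1 + d) := by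
    have hc : (-3 : ℤ) • eδ = (-3 : ℚ) • eδ := by
      rw [← Int.cast_smul_eq_zsmul ℚ]; norm_num
    rw [hc]
    refine hinj 2 _ _ (by norm_num) ?_
    rw [smul_sub, smul_smul, show (2 : ℚ) * (-3) = -6 by norm_num,
      show (-6 : ℚ) • eδ = -((6 : ℚ) • eδ) by rw [neg_smul], E1, E3, hq2]
    ring
  -- the span equality
  have hLspan : L = Submodule.span ℤ
      {(1 : (MvPolynomial (Fin 2) ℚ ⧸ I)), (2 : ℤ) • (eδ + eψ), (3 : ℤ) • eψ} := by
    rw [hL, g2, g3]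
    have m1 : (1 : (MvPolynomial (Fin 2) ℚ ⧸ I)) ∈ Submodule.span ℤ ({1, 1 + b, 1 + b - d} : Set (MvPolynomial (Fin 2) ℚ ⧸ I)) :=
      Submodule.subset_span (by simp)
    have m2 : (1 + b : (MvPolynomial (Fin 2) ℚ ⧸ I)) ∈ Submodule.span ℤ ({1, 1 + b, 1 + b - d} : Set (MvPolynomial (Fin 2) ℚ ⧸ I)) :=
      Submodule.subset_span (by simp)
    have m3 : (1 + b - d : (MvPolynomial (Fin 2) ℚ ⧸ I)) ∈ Submodule.span ℤ ({1, 1 + b, 1 + b - d} : Set (MvPolynomial (Fin 2) ℚ ⧸ I)) :=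
      Submodule.subset_span (by simp)
    have n1 : (1 : (MvPolynomial (Fin 2) ℚ ⧸ I)) ∈ Submodule.span ℤ ({1, b, d} : Set (MvPolynomial (Fin 2) ℚ ⧸ I)) :=
      Submodule.subset_span (by simp)
    have n2 : (b : (MvPolynomial (Fin 2) ℚ ⧸ I)) ∈ Submodule.span ℤ ({1, b, d} : Set (MvPolynomial (Fin 2) ℚ ⧸ I)) :=
      Submodule.subset_span (by simp)
    have n3 : (d : (MvPolynomial (Fin 2) ℚ ⧸ I)) ∈ Submodule.span ℤ ({1, b, d} : Set (MvPolynomial (Fin 2) ℚ ⧸ I)) :=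
      Submodule.subset_span (by simp)
    apply le_antisymm
    · rw [Submodule.span_le]
      intro x hx
      simp only [Set.mem_insert_iff, Set.mem_singleton_iff] at hx
      rcases hx with rfl | rfl | rfl
      · exact m1
      · simpa using sub_mem m2 m1
      · simpa using sub_mem m2 m3
    · rw [Submodule.span_le]
      intro x hx
      simp only [Set.mem_insert_iff, Set.mem_singleton_iff] at hx
      rcases hx with rfl | rfl | rfl
      · exact n1
      · exact add_mem n1 n2
      · exact sub_mem (add_mem n1 n2) n3
  -- characters
  have mkchar : ∀ v : Fin 2 → ℚ, v 0 ^ 2 = 1 → v 0 * v 1 = v 1 →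
      v 1 ^ 2 = 1 + v 0 + v 1 →
      ∃ χ : (MvPolynomial (Fin 2) ℚ ⧸ I) →ₐ[ℚ] ℚ, χ b = v 0 ∧ χ d = v 1 := by
    intro v h0 h1 h2
    have hker : ∀ a ∈ I, (MvPolynomial.aeval v) a = 0 := by
      intro a ha
      rw [hI] at ha
      have hle : Ideal.span ({MvPolynomial.X 0 ^ 2 - 1,
          MvPolynomial.X 0 * MvPolynomial.X 1 - MvPolynomial.X 1,
          MvPolynomial.X 1 ^ 2 - (1 + MvPolynomial.X 0 + MvPolynomial.X 1)} :
            Set (MvPolynomial (Fin 2) ℚ)) ≤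
          RingHom.ker (MvPolynomial.aeval v : MvPolynomial (Fin 2) ℚ →ₐ[ℚ] ℚ) := by
        rw [Ideal.span_le]
        intro p hp
        simp only [Set.mem_insert_iff, Set.mem_singleton_iff] at hp
        rw [SetLike.mem_coe, RingHom.mem_ker]
        rcases hp with rfl | rfl | rfl
        · simp only [map_sub, map_pow, map_one, MvPolynomial.aeval_X]
          linear_combination h0
        · simp only [map_sub, map_mul, MvPolynomial.aeval_X]
          linear_combination h1
        · simp only [map_sub, map_pow, map_add, map_one, MvPolynomial.aeval_X]
          linear_combination h2
      exact RingHom.mem_ker.mp (hle ha)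
    refine ⟨Ideal.Quotient.liftₐ I (MvPolynomial.aeval v) hker, ?_, ?_⟩
    · rw [hb]
      simp [Ideal.Quotient.liftₐ_apply, Ideal.Quotient.lift_mk]
    · rw [hd]
      simp [Ideal.Quotient.liftₐ_apply, Ideal.Quotient.lift_mk]
  obtain ⟨χδ, hχδb, hχδd⟩ := mkchar ![1, 2] (by norm_num) (by norm_num) (by norm_num)
  obtain ⟨χψ, hχψb, hχψd⟩ := mkchar ![1, -1] (by norm_num) (by norm_num) (by norm_num)
  obtain ⟨χφ, hχφb, hχφd⟩ := mkchar ![-1, 0] (by norm_num) (by norm_num) (by norm_num)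
  simp only [Matrix.cons_val_zero, Matrix.cons_val_one, Matrix.head_cons]
    at hχδb hχδd hχψb hχψd hχφb hχφd
  have hχδδ : χδ eδ = 1 := by
    rw [heδ, map_smul]
    rw [show χδ (1 + b + 2 * d) = 1 + χδ b + 2 * χδ d from by
      rw [map_add, map_add, map_one, map_mul, map_ofNat]]
    rw [hχδb, hχδd]
    norm_num
  -- the index computation
  have heδL₀ : eδ ∈ L₀ := by
    rw [hL₀]; exact Submodule.subset_span (by simp)
  have hχψδ : χψ eδ = 0 := by
    rw [heδ, map_smul]
    rw [show χψ (1 + b + 2 * d) = 1 + χψ b + 2 * χψ d from by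
      rw [map_add, map_add, map_one, map_mul, map_ofNat]]
    rw [hχψb, hχψd]
    norm_num
  have hχφδ : χφ eδ = 0 := by
    rw [heδ, map_smul]
    rw [show χφ (1 + b + 2 * d) = 1 + χφ b + 2 * χφ d from by
      rw [map_add, map_add, map_one, map_mul, map_ofNat]]
    rw [hχφb, hχφd]
    norm_num
  -- membership facts in L
  have h1L : (1 : MvPolynomial (Fin 2) ℚ ⧸ I) ∈ L := by
    rw [hL]; exact Submodule.subset_span (by simp)
  have hbL : b ∈ L := by
    rw [hL]; exact Submodule.subset_span (by simp)
  have hdL : d ∈ L := by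
    rw [hL]; exact Submodule.subset_span (by simp)
  have h2d : (2 : ℤ) • d = 2 * d := by
    rw [zsmul_eq_mul]; norm_num
  have h2dL : 2 * d ∈ L := by
    rw [← h2d]; exact Submodule.smul_mem _ _ hdL
  -- explicit representations of span members
  have hrep : ∀ x : MvPolynomial (Fin 2) ℚ ⧸ I,
      x ∈ Submodule.span ℤ ({eδ, eψ, eφ} : Set (MvPolynomial (Fin 2) ℚ ⧸ I)) →
      ∃ a c e : ℤ, x = a • eδ + (c • eψ + e • eφ) := by
    intro x hx
    rw [Submodule.mem_span_insert] at hx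
    obtain ⟨a, z, hz, rfl⟩ := hx
    rw [Submodule.mem_span_pair] at hz
    obtain ⟨c, e, rfl⟩ := hz
    exact ⟨a, c, e, rfl⟩
  have hrepL : ∀ x : MvPolynomial (Fin 2) ℚ ⧸ I,
      x ∈ Submodule.span ℤ ({1, b, d} : Set (MvPolynomial (Fin 2) ℚ ⧸ I)) →
      ∃ a c e : ℤ, x = a • (1 : MvPolynomial (Fin 2) ℚ ⧸ I) + (c • b + e • d) := by
    intro x hx
    rw [Submodule.mem_span_insert] at hx
    obtain ⟨a, z, hz, rfl⟩ := hx
    rw [Submodule.mem_span_pair] at hz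
    obtain ⟨c, e, rfl⟩ := hz
    exact ⟨a, c, e, rfl⟩
  -- the quotient map
  set K : Submodule ℤ L₀ := Submodule.comap L₀.subtype L with hK
  let x0 : L₀ := ⟨eδ, heδL₀⟩
  let h : ℤ →ₗ[ℤ] (L₀ ⧸ K) := K.mkQ.comp (LinearMap.toSpanSingleton ℤ L₀ x0)
  have happly : ∀ n : ℤ, h n = K.mkQ (n • x0) := fun n => rfl
  have hsurj : Function.Surjective h := by
    intro q
    obtain ⟨y, rfl⟩ := Submodule.mkQ_surjective K q
    obtain ⟨a, c, e, hy⟩ := hrep y.1 (hL₀ ▸ y.2)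
    refine ⟨a + 2 * c + (-3) * e, ?_⟩
    rw [happly]
    refine (Submodule.Quotient.eq K).mpr ?_
    rw [hK, Submodule.mem_comap]
    have hcoe : L₀.subtype ((a + 2 * c + (-3) * e) • x0 - y)
        = (a + 2 * c + (-3) * e) • eδ - y.1 := by
      simp [x0]
    rw [hcoe, hy]
    have key : (a + 2 * c + (-3) * e) • eδ - (a • eδ + (c • eψ + e • eφ))
        = c • ((2 : ℤ) • eδ - eψ) + e • ((-3 : ℤ) • eδ - eφ) := by
      module
    rw [key, g2δψ, g3δφ]
    exact add_mem (Submodule.smul_mem _ _ hdL)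
      (Submodule.smul_mem _ _ (neg_mem (add_mem h1L hdL)))
  have hkerh : LinearMap.ker h = Submodule.span ℤ {(6 : ℤ)} := by
    ext n
    simp only [LinearMap.mem_ker, Submodule.mem_span_singleton]
    constructor
    · intro hn
      have hn' : (n • x0 : L₀) ∈ K := by
        rw [← Submodule.Quotient.mk_eq_zero K]
        rw [happly] at hn
        exact hn
      have hmem : n • eδ ∈ L := by
        rw [hK, Submodule.mem_comap] at hn'
        simpa [x0] using hn'
      obtain ⟨a, c, e, hx⟩ := hrepL _ (hL ▸ hmem)
      have q1 := congrArg χδ hx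
      have q2 := congrArg χψ hx
      have q3 := congrArg χφ hx
      simp only [map_zsmul, map_add, map_one, hχδb, hχδd, hχψb, hχψd, hχφb, hχφd,
        hχδδ, hχψδ, hχφδ] at q1 q2 q3
      simp only [zsmul_eq_mul, smul_eq_mul, mul_one, mul_zero, add_zero,
        zero_add] at q1 q2 q3
      have hq : (n : ℚ) = 6 * (a : ℚ) := by linarith
      have hn6 : n = 6 * a := by exact_mod_cast hq
      exact ⟨a, by rw [smul_eq_mul]; omega⟩
    · rintro ⟨m, hm⟩
      have h6 : h 6 = 0 := by
        rw [happly, Submodule.mkQ_apply, Submodule.Quotient.mk_eq_zero, hK,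
          Submodule.mem_comap]
        have hcoe : L₀.subtype ((6 : ℤ) • x0) = (6 : ℤ) • eδ := by simp [x0]
        rw [hcoe, g6]
        exact add_mem (add_mem h1L hbL) h2dL
      rw [← hm, map_smul, h6, smul_zero]
  have equiv1 := h.quotKerEquivOfSurjective hsurj
  refine ⟨hsum, hδψ, hδφ, hψφ, hδ2, hψ2, hφ2, hLspan, ?_⟩
  rw [← Nat.card_congr equiv1.toEquiv, hkerh]
  have e2 := Int.quotientSpanNatEquivZMod 6
  calc Nat.card (ℤ ⧸ Submodule.span ℤ {(6 : ℤ)})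
      = Nat.card (ZMod 6) := Nat.card_congr e2.toEquiv
    _ = 6 := Nat.card_zmod 6
end
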